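/- arXiv:1802.08169 — 7 statements merged into one kernel-verified Lean document; each statement's English description precedes it below -/
import Mathlib

section
/- Let U ⊆ ℂ be open, let (f, g) be Weierstrass data on U, and let X : U → ℝ³ be a differentiable map whose partial derivatives satisfy ∂X/∂x (z) = Re Φ(z) and ∂X/∂y (z) = −Im Φ(z) for all z ∈ U, where Φ = (f(1 − g²)/2, i f(1 + g²)/2, f g) : U → ℂ³ (real and imaginary parts taken componentwise). Then X is a conformal immersion with conformal factor λ: for every z ∈ U one has ‖∂X/∂x (z)‖ = ‖∂X/∂y (z)‖ = λ(z) and ⟨∂X/∂x (z), ∂X/∂y (z)⟩ = 0. -/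
/-- Weierstrass data induce a conformal immersion.
Let `U ⊆ ℂ` be open, `(f, g)` Weierstrass data on `U` (holomorphic, `f ≠ 0`,
`g' ≠ 0` on `U`), and let `X : U → ℝ³` have partial derivatives
`∂X/∂x = Re Φ` and `∂X/∂y = −Im Φ` where
`Φ = (f(1 − g²)/2, i f(1 + g²)/2, f g)`.  Then for every `z ∈ U`,
`‖∂X/∂x (z)‖ = ‖∂X/∂y (z)‖ = λ(z) = |f(z)|(1 + |g(z)|²)/2` and
`⟨∂X/∂x (z), ∂X/∂y (z)⟩ = 0`. -/
theorem weierstrass_representation_conformal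
    (U : Set ℂ) (hU : IsOpen U)
    (f g : ℂ → ℂ)
    (hf : DifferentiableOn ℂ f U) (hg : DifferentiableOn ℂ g U)
    (hf0 : ∀ z ∈ U, f z ≠ 0) (hg' : ∀ z ∈ U, deriv g z ≠ 0)
    (Φ : ℂ → Fin 3 → ℂ)
    (hΦ : ∀ z, Φ z = ![f z * (1 - g z ^ 2) / 2,
                        Complex.I * f z * (1 + g z ^ 2) / 2,
                        f z * g z])
    (X : ℂ → EuclideanSpace ℝ (Fin 3))
    (hXdiff : ∀ z ∈ U, DifferentiableAt ℝ X z)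
    (hXx : ∀ z ∈ U, fderiv ℝ X z 1 =
      (WithLp.equiv 2 (Fin 3 → ℝ)).symm (fun i => (Φ z i).re))
    (hXy : ∀ z ∈ U, fderiv ℝ X z Complex.I =
      (WithLp.equiv 2 (Fin 3 → ℝ)).symm (fun i => -(Φ z i).im))
    (lam : ℂ → ℝ)
    (hlam : ∀ z, lam z = ‖f z‖ * (1 + ‖g z‖ ^ 2) / 2) :
    ∀ z ∈ U,
      ‖fderiv ℝ X z 1‖ = lam z ∧
      ‖fderiv ℝ X z Complex.I‖ = lam z ∧
      inner ℝ (fderiv ℝ X z 1) (fderiv ℝ X z Complex.I) = (0 : ℝ) := by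
  intro z hz
  have hnn : 0 ≤ ‖f z‖ * (1 + ‖g z‖ ^ 2) / 2 := by positivity
  have h1 : ‖f z‖ * ‖f z‖ = Complex.normSq (f z) := by rw [← Complex.sq_norm, sq]
  have h2 : ‖g z‖ * ‖g z‖ = Complex.normSq (g z) := by rw [← Complex.sq_norm, sq]
  simp only [Complex.normSq_apply] at h1 h2
  have hsq : (lam z) = Real.sqrt ((‖f z‖ * (1 + ‖g z‖ ^ 2) / 2) ^ 2) := by
    rw [hlam, Real.sqrt_sq hnn]
  refine ⟨?_, ?_, ?_⟩
  · rw [hXx z hz, hΦ, hsq, EuclideanSpace.norm_eq]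
    congr 1
    simp only [WithLp.equiv_symm_apply, PiLp.toLp_apply, Fin.sum_univ_three,
      Matrix.cons_val_zero, Matrix.cons_val_one, Matrix.head_cons,
      Matrix.cons_val_two, Matrix.tail_cons,
      Complex.div_re, Complex.mul_re, Complex.mul_im, Complex.sub_re, Complex.sub_im,
      Complex.one_re, Complex.one_im, Complex.I_re, Complex.I_im, Complex.add_re, Complex.add_im,
      Complex.normSq_ofNat, Complex.ofReal_re, Complex.sq_norm, Complex.normSq_apply,
      Complex.re_ofNat, Complex.im_ofNat, Real.norm_eq_abs, sq_abs, pow_two, abs_mul_abs_self]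
    linear_combination (-(1 + ‖g z‖ * ‖g z‖)^2/4) * h1 -
      (((f z).re*(f z).re+(f z).im*(f z).im) * (2 + ‖g z‖*‖g z‖ + ((g z).re*(g z).re+(g z).im*(g z).im))/4) * h2
  · rw [hXy z hz, hΦ, hsq, EuclideanSpace.norm_eq]
    congr 1
    simp only [WithLp.equiv_symm_apply, PiLp.toLp_apply, Fin.sum_univ_three,
      Matrix.cons_val_zero, Matrix.cons_val_one, Matrix.head_cons,
      Matrix.cons_val_two, Matrix.tail_cons,
      Complex.div_im, Complex.div_re, Complex.mul_re, Complex.mul_im, Complex.sub_re,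
      Complex.sub_im,
      Complex.one_re, Complex.one_im, Complex.I_re, Complex.I_im, Complex.add_re, Complex.add_im,
      Complex.normSq_ofNat, Complex.ofReal_re, Complex.sq_norm, Complex.normSq_apply,
      Complex.re_ofNat, Complex.im_ofNat, Real.norm_eq_abs, sq_abs, pow_two, abs_mul_abs_self,
      neg_mul, mul_neg, neg_neg]
    linear_combination (-(1 + ‖g z‖ * ‖g z‖)^2/4) * h1 -
      (((f z).re*(f z).re+(f z).im*(f z).im) * (2 + ‖g z‖*‖g z‖ + ((g z).re*(g z).re+(g z).im*(g z).im))/4) * h2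
  · rw [hXx z hz, hXy z hz, hΦ]
    simp only [PiLp.inner_apply, RCLike.inner_apply, conj_trivial,
      WithLp.equiv_symm_apply, PiLp.toLp_apply, Fin.sum_univ_three,
      Matrix.cons_val_zero, Matrix.cons_val_one, Matrix.head_cons,
      Matrix.cons_val_two, Matrix.tail_cons,
      Complex.div_im, Complex.div_re, Complex.mul_re, Complex.mul_im, Complex.sub_re,
      Complex.sub_im,
      Complex.one_re, Complex.one_im, Complex.I_re, Complex.I_im, Complex.add_re, Complex.add_im,
      Complex.normSq_ofNat, Complex.ofReal_re,
      Complex.re_ofNat, Complex.im_ofNat, pow_two]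
    ring
end

section
/- Let U ⊆ ℂ be open, let (f, g) be Weierstrass data on U, and let X : U → ℝ³ be a differentiable map whose partial derivatives satisfy ∂X/∂x (z) = Re Φ(z) and ∂X/∂y (z) = −Im Φ(z) for all z ∈ U, where Φ = (f(1 − g²)/2, i f(1 + g²)/2, f g). Then the Gauss map N(z) = (2 Re g(z), 2 Im g(z), |g(z)|² − 1)/(1 + |g(z)|²) is a unit normal field along X: for every z ∈ U, ‖N(z)‖ = 1 and ⟨N(z), ∂X/∂x (z)⟩ = ⟨N(z), ∂X/∂y (z)⟩ = 0. -/
/-- The Gauss map of the Weierstrass representation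
`N(z) = (2 Re g, 2 Im g, |g|² − 1)/(1 + |g|²)` is a unit normal field along `X`:
for every `z ∈ U`, `‖N(z)‖ = 1` and `N(z)` is orthogonal to both partial
derivatives `∂X/∂x (z)` and `∂X/∂y (z)`. -/
theorem weierstrass_gauss_map_unit_normal
    (U : Set ℂ) (hU : IsOpen U)
    (f g : ℂ → ℂ)
    (hf : DifferentiableOn ℂ f U) (hg : DifferentiableOn ℂ g U)
    (hf0 : ∀ z ∈ U, f z ≠ 0) (hg' : ∀ z ∈ U, deriv g z ≠ 0)
    (Φ : ℂ → Fin 3 → ℂ)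
    (hΦ : ∀ z, Φ z = ![f z * (1 - g z ^ 2) / 2,
                        Complex.I * f z * (1 + g z ^ 2) / 2,
                        f z * g z])
    (X : ℂ → EuclideanSpace ℝ (Fin 3))
    (hXdiff : ∀ z ∈ U, DifferentiableAt ℝ X z)
    (hXx : ∀ z ∈ U, fderiv ℝ X z 1 =
      (WithLp.equiv 2 (Fin 3 → ℝ)).symm (fun i => (Φ z i).re))
    (hXy : ∀ z ∈ U, fderiv ℝ X z Complex.I =
      (WithLp.equiv 2 (Fin 3 → ℝ)).symm (fun i => -(Φ z i).im))
    (N : ℂ → EuclideanSpace ℝ (Fin 3))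
    (hN : ∀ z, N z = (1 + ‖g z‖ ^ 2)⁻¹ •
      (WithLp.equiv 2 (Fin 3 → ℝ)).symm
        ![2 * (g z).re, 2 * (g z).im, ‖g z‖ ^ 2 - 1]) :
    ∀ z ∈ U,
      ‖N z‖ = 1 ∧
      inner ℝ (N z) (fderiv ℝ X z 1) = (0 : ℝ) ∧
      inner ℝ (N z) (fderiv ℝ X z Complex.I) = (0 : ℝ) := by
  intro z hz
  have habs : ‖g z‖ ^ 2 = (g z).re ^ 2 + (g z).im ^ 2 := by
    rw [Complex.sq_norm, Complex.normSq_apply]; ring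
  have hpos : (0:ℝ) < 1 + ‖g z‖ ^ 2 := by positivity
  have hne : (1 + ‖g z‖ ^ 2) ≠ 0 := ne_of_gt hpos
  refine ⟨?_, ?_, ?_⟩
  · have : ‖N z‖ ^ 2 = 1 := by
      rw [← real_inner_self_eq_norm_sq, hN]
      simp only [inner_smul_left, inner_smul_right, RCLike.conj_to_real]
      rw [PiLp.inner_apply]
      simp only [WithLp.equiv_symm_apply, WithLp.ofLp_toLp, RCLike.inner_apply, RCLike.conj_to_real,
        Fin.sum_univ_three, Matrix.cons_val_zero, Matrix.cons_val_one, Matrix.head_cons,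
        Matrix.cons_val_two, Matrix.tail_cons]
      rw [habs]
      field_simp
      ring
    nlinarith [norm_nonneg (N z), this]
  · rw [hN, hXx z hz, inner_smul_left, RCLike.conj_to_real, PiLp.inner_apply]
    simp only [WithLp.equiv_symm_apply, WithLp.ofLp_toLp, RCLike.inner_apply, RCLike.conj_to_real,
      Fin.sum_univ_three, Matrix.cons_val_zero, Matrix.cons_val_one, Matrix.head_cons,
      Matrix.cons_val_two, Matrix.tail_cons, hΦ]
    simp only [Complex.div_re, Complex.mul_re, Complex.mul_im, Complex.sub_re, Complex.sub_im,
      Complex.add_re, Complex.add_im, Complex.one_re, Complex.one_im, Complex.I_re, Complex.I_im,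
      Complex.re_ofNat, Complex.im_ofNat, Complex.normSq_ofNat]
    rw [habs]
    have h2 : ((g z)^2).re = (g z).re^2 - (g z).im^2 := by
      rw [sq]; simp [Complex.mul_re]; ring
    have h2i : ((g z)^2).im = 2 * (g z).re * (g z).im := by
      rw [sq]; simp [Complex.mul_im]; ring
    rw [h2, h2i]
    field_simp
    ring
  · rw [hN, hXy z hz, inner_smul_left, RCLike.conj_to_real, PiLp.inner_apply]
    simp only [WithLp.equiv_symm_apply, WithLp.ofLp_toLp, RCLike.inner_apply, RCLike.conj_to_real,
      Fin.sum_univ_three, Matrix.cons_val_zero, Matrix.cons_val_one, Matrix.head_cons,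
      Matrix.cons_val_two, Matrix.tail_cons, hΦ]
    simp only [Complex.div_im, Complex.div_re, Complex.mul_re, Complex.mul_im, Complex.sub_re,
      Complex.sub_im, Complex.add_re, Complex.add_im, Complex.one_re, Complex.one_im,
      Complex.I_re, Complex.I_im, Complex.re_ofNat, Complex.im_ofNat, Complex.normSq_ofNat]
    rw [habs]
    have h2 : ((g z)^2).re = (g z).re^2 - (g z).im^2 := by
      rw [sq]; simp [Complex.mul_re]; ring
    have h2i : ((g z)^2).im = 2 * (g z).re * (g z).im := by
      rw [sq]; simp [Complex.mul_im]; ring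
    rw [h2, h2i]
    field_simp
    ring
end

section
/- Let U ⊆ ℂ be open and let (f, g) be Weierstrass data on U. Then the Gauss curvature of the induced metric is computed in the isothermal coordinate by Δ(ln λ)(z) = −K(z) λ(z)² for every z ∈ U, where Δ is the flat Laplacian, λ(z) = |f(z)|(1 + |g(z)|²)/2, and K(z) = −(4|g'(z)| / (|f(z)|(1 + |g(z)|²)²))². -/
open Complex Filter Topology


/-- The flat Laplacian `Δ = ∂²/∂x² + ∂²/∂y²` on `ℂ ≃ ℝ²`, where the `x`-direction
is `1 : ℂ` and the `y`-direction is `I : ℂ`. -/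
noncomputable def flatLaplacian (F : ℂ → ℝ) (z : ℂ) : ℝ :=
  fderiv ℝ (fun w => fderiv ℝ F w 1) z 1 +
    fderiv ℝ (fun w => fderiv ℝ F w Complex.I) z Complex.I



noncomputable def mulCLM (c : ℂ) : ℂ →L[ℝ] ℂ :=
  (c • (1 : ℂ →L[ℂ] ℂ)).restrictScalars ℝ

@[simp] lemma mulCLM_apply (c e : ℂ) : mulCLM c e = c * e := by
  simp [mulCLM, smul_eq_mul]

lemma hasFDerivAt_mulCLM {h : ℂ → ℂ} {c w : ℂ} (hd : HasDerivAt h c w) :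
    HasFDerivAt h (mulCLM c) w := by
  have h1 := hd.hasFDerivAt.restrictScalars ℝ
  have heq : mulCLM c = (ContinuousLinearMap.smulRight (1 : ℂ →L[ℂ] ℂ) c).restrictScalars ℝ := by
    ext e
    simp [mulCLM, smul_eq_mul, mul_comm]
  rw [heq]
  exact h1

/-- Derivative of `w ↦ a + normSq (h w)` at a point of complex differentiability. -/
lemma hasFDerivAt_add_normSq {h : ℂ → ℂ} {w : ℂ} (a : ℝ) (hd : DifferentiableAt ℂ h w) :
    HasFDerivAt (fun w => a + Complex.normSq (h w))
      ((2 : ℝ) • (Complex.reCLM.comp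
        (mulCLM ((starRingEnd ℂ) (h w) * deriv h w)))) w := by
  have hF : HasFDerivAt h (mulCLM (deriv h w)) w := hasFDerivAt_mulCLM hd.hasDerivAt
  have hu : HasFDerivAt (fun w => (h w).re) (Complex.reCLM.comp (mulCLM (deriv h w))) w :=
    (Complex.reCLM.hasFDerivAt).comp w hF
  have hv : HasFDerivAt (fun w => (h w).im) (Complex.imCLM.comp (mulCLM (deriv h w))) w :=
    (Complex.imCLM.hasFDerivAt).comp w hF
  have hN := ((hu.mul hu).add (hv.mul hv)).const_add a
  have hfun : (fun w => a + ((h w).re * (h w).re + (h w).im * (h w).im)) =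
      (fun w => a + Complex.normSq (h w)) := by
    funext w; rw [Complex.normSq_apply]
  simp only [Pi.add_apply, Pi.mul_apply] at hN
  rw [hfun] at hN
  refine hN.congr_fderiv ?_
  ext e
  simp [Complex.mul_re, mulCLM, smul_eq_mul]
  ring

/-- Derivative of `w ↦ log (a + normSq (h w))`. -/
lemma hasFDerivAt_log_add_normSq {h : ℂ → ℂ} {w : ℂ} {a : ℝ} (hd : DifferentiableAt ℂ h w)
    (hpos : 0 < a + Complex.normSq (h w)) :
    HasFDerivAt (fun w => Real.log (a + Complex.normSq (h w)))
      ((2 / (a + Complex.normSq (h w))) • (Complex.reCLM.comp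
        (mulCLM ((starRingEnd ℂ) (h w) * deriv h w)))) w := by
  have hN := hasFDerivAt_add_normSq a hd
  have hlog := hN.log hpos.ne'
  refine hlog.congr_fderiv ?_
  ext e
  simp [mulCLM, smul_eq_mul]
  ring


lemma flatLaplacian_congr {F G : ℂ → ℝ} {z : ℂ} (h : F =ᶠ[𝓝 z] G) :
    flatLaplacian F z = flatLaplacian G z := by
  have h1 : fderiv ℝ F =ᶠ[𝓝 z] fderiv ℝ G := h.fderiv
  have e1 : (fun w => fderiv ℝ F w (1 : ℂ)) =ᶠ[𝓝 z] (fun w => fderiv ℝ G w (1 : ℂ)) :=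
    h1.mono fun w hw => by simp only [hw]
  have eI : (fun w => fderiv ℝ F w Complex.I) =ᶠ[𝓝 z] (fun w => fderiv ℝ G w Complex.I) :=
    h1.mono fun w hw => by simp only [hw]
  unfold flatLaplacian
  rw [e1.fderiv_eq, eI.fderiv_eq]

lemma flatLaplacian_combo {F G : ℂ → ℝ} {z : ℂ} (c₁ c₀ : ℝ)
    (hF : ∀ᶠ w in 𝓝 z, DifferentiableAt ℝ F w)
    (hG : ∀ᶠ w in 𝓝 z, DifferentiableAt ℝ G w)
    (hF1 : DifferentiableAt ℝ (fun w => fderiv ℝ F w (1 : ℂ)) z)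
    (hFI : DifferentiableAt ℝ (fun w => fderiv ℝ F w Complex.I) z)
    (hG1 : DifferentiableAt ℝ (fun w => fderiv ℝ G w (1 : ℂ)) z)
    (hGI : DifferentiableAt ℝ (fun w => fderiv ℝ G w Complex.I) z) :
    flatLaplacian (fun w => c₁ * F w + G w + c₀) z
      = c₁ * flatLaplacian F z + flatLaplacian G z := by
  have key : ∀ e : ℂ, (fun w => fderiv ℝ (fun w => c₁ * F w + G w + c₀) w e) =ᶠ[𝓝 z]
      (fun w => c₁ * fderiv ℝ F w e + fderiv ℝ G w e) := by
    intro e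
    refine (hF.and hG).mono fun w ⟨hfw, hgw⟩ => ?_
    have : HasFDerivAt (fun w => c₁ * F w + G w + c₀)
        ((c₁ • fderiv ℝ F w + fderiv ℝ G w)) w := by
      simpa using (((hfw.hasFDerivAt.const_mul c₁).add hgw.hasFDerivAt).add_const c₀)
    simp only [this.fderiv, ContinuousLinearMap.add_apply, ContinuousLinearMap.smul_apply,
      smul_eq_mul]
  have d1 : ∀ e : ℂ, DifferentiableAt ℝ (fun w => fderiv ℝ F w e) z →
      DifferentiableAt ℝ (fun w => fderiv ℝ G w e) z →
      fderiv ℝ (fun w => fderiv ℝ (fun w => c₁ * F w + G w + c₀) w e) z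
      = c₁ • fderiv ℝ (fun w => fderiv ℝ F w e) z + fderiv ℝ (fun w => fderiv ℝ G w e) z := by
    intro e hFe hGe
    rw [(key e).fderiv_eq]
    exact ((hFe.hasFDerivAt.const_mul c₁).add hGe.hasFDerivAt).fderiv
  unfold flatLaplacian
  rw [d1 1 hF1 hG1, d1 Complex.I hFI hGI]
  simp only [ContinuousLinearMap.add_apply, ContinuousLinearMap.smul_apply, smul_eq_mul]
  ring

lemma lap_log_add_normSq {h : ℂ → ℂ} {a : ℝ} {z : ℂ}
    (hd : ∀ᶠ w in 𝓝 z, DifferentiableAt ℂ h w)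
    (hd1 : DifferentiableAt ℂ (deriv h) z)
    (hpos : 0 < a + Complex.normSq (h z)) :
    flatLaplacian (fun w => Real.log (a + Complex.normSq (h w))) z
        = 4 * a * Complex.normSq (deriv h z) / (a + Complex.normSq (h z)) ^ 2 ∧
    (∀ e : ℂ, DifferentiableAt ℝ
        (fun w => fderiv ℝ (fun w => Real.log (a + Complex.normSq (h w))) w e) z) ∧
    (∀ᶠ w in 𝓝 z, DifferentiableAt ℝ (fun w => Real.log (a + Complex.normSq (h w))) w) := by
  have hdz : DifferentiableAt ℂ h z := hd.self_of_nhds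
  have hcont : ContinuousAt (fun w => a + Complex.normSq (h w)) z :=
    continuousAt_const.add (Complex.continuous_normSq.continuousAt.comp hdz.continuousAt)
  have hpos' : ∀ᶠ w in 𝓝 z, 0 < a + Complex.normSq (h w) :=
    hcont.eventually (eventually_gt_nhds hpos)
  have hev : ∀ᶠ w in 𝓝 z, HasFDerivAt (fun w => Real.log (a + Complex.normSq (h w)))
      ((2 / (a + Complex.normSq (h w))) • (Complex.reCLM.comp
        (mulCLM ((starRingEnd ℂ) (h w) * deriv h w)))) w :=
    (hd.and hpos').mono fun w ⟨h1, h2⟩ => hasFDerivAt_log_add_normSq h1 h2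
  -- the explicit first-derivative function in direction e
  set q : ℂ → ℂ → ℝ := fun e w =>
    2 * (e * ((starRingEnd ℂ) (h w) * deriv h w)).re * (a + Complex.normSq (h w))⁻¹ with hqdef
  have heq : ∀ e : ℂ, (fun w => fderiv ℝ (fun w => Real.log (a + Complex.normSq (h w))) w e)
      =ᶠ[𝓝 z] q e := by
    intro e
    refine hev.mono fun w hw => ?_
    simp only [hw.fderiv, ContinuousLinearMap.smul_apply, ContinuousLinearMap.coe_comp',
      Function.comp_apply, mulCLM_apply, Complex.reCLM_apply, smul_eq_mul, hqdef]
    rw [mul_comm ((starRingEnd ℂ) (h w) * deriv h w) e]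
    ring
  -- second derivative data
  have hF : HasFDerivAt h (mulCLM (deriv h z)) z := hasFDerivAt_mulCLM hdz.hasDerivAt
  have hstar : HasFDerivAt (fun w => (starRingEnd ℂ) (h w))
      ((((starL' ℝ : ℂ ≃L[ℝ] ℂ) : ℂ →L[ℝ] ℂ)).comp (mulCLM (deriv h z))) z := hF.star
  have hder : HasFDerivAt (deriv h) (mulCLM (deriv (deriv h) z)) z :=
    hasFDerivAt_mulCLM hd1.hasDerivAt
  have hA : HasFDerivAt (fun w => (starRingEnd ℂ) (h w) * deriv h w)
      (((starRingEnd ℂ) (h z)) • (mulCLM (deriv (deriv h) z)) +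
        ((((starL' ℝ : ℂ ≃L[ℝ] ℂ) : ℂ →L[ℝ] ℂ)).comp (mulCLM (deriv h z))).smulRight
          (deriv h z)) z := hstar.mul' hder
  have hn : ∀ e : ℂ, HasFDerivAt (fun w => 2 * (e * ((starRingEnd ℂ) (h w) * deriv h w)).re)
      ((2 : ℝ) • ((Complex.reCLM.comp (mulCLM e)).comp
        (((starRingEnd ℂ) (h z)) • (mulCLM (deriv (deriv h) z)) +
        ((((starL' ℝ : ℂ ≃L[ℝ] ℂ) : ℂ →L[ℝ] ℂ)).comp (mulCLM (deriv h z))).smulRight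
          (deriv h z)))) z := by
    intro e
    exact ((Complex.reCLM.comp (mulCLM e)).hasFDerivAt.comp z hA).const_mul 2
  have hD := hasFDerivAt_add_normSq a hdz
  have hinv : HasFDerivAt (fun w => (a + Complex.normSq (h w))⁻¹)
      ((-((a + Complex.normSq (h z)) ^ 2)⁻¹) • ((2 : ℝ) • (Complex.reCLM.comp
        (mulCLM ((starRingEnd ℂ) (h z) * deriv h z))))) z :=
    (hasDerivAt_inv hpos.ne').comp_hasFDerivAt z hD
  have hq : ∀ e : ℂ, HasFDerivAt (q e)
      ((2 * (e * ((starRingEnd ℂ) (h z) * deriv h z)).re) •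
          ((-((a + Complex.normSq (h z)) ^ 2)⁻¹) • ((2 : ℝ) • (Complex.reCLM.comp
            (mulCLM ((starRingEnd ℂ) (h z) * deriv h z)))))
        + (a + Complex.normSq (h z))⁻¹ •
          ((2 : ℝ) • ((Complex.reCLM.comp (mulCLM e)).comp
            (((starRingEnd ℂ) (h z)) • (mulCLM (deriv (deriv h) z)) +
            ((((starL' ℝ : ℂ ≃L[ℝ] ℂ) : ℂ →L[ℝ] ℂ)).comp (mulCLM (deriv h z))).smulRight
              (deriv h z))))) z := by
    intro e
    exact (hn e).mul hinv
  refine ⟨?_, fun e => ((heq e).differentiableAt_iff).mpr (hq e).differentiableAt, 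
    hev.mono fun w hw => hw.differentiableAt⟩
  unfold flatLaplacian
  rw [(heq 1).fderiv_eq, (heq Complex.I).fderiv_eq, (hq 1).fderiv, (hq Complex.I).fderiv]
  have hD0 : (a + Complex.normSq (h z)) ≠ 0 := hpos.ne'
  simp only [ContinuousLinearMap.add_apply, ContinuousLinearMap.smul_apply,
    ContinuousLinearMap.coe_comp', Function.comp_apply, mulCLM_apply, Complex.reCLM_apply,
    ContinuousLinearMap.smulRight_apply, smul_eq_mul, ContinuousLinearEquiv.coe_coe,
    starL'_apply, Complex.mul_re, Complex.mul_im,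
    Complex.one_re, Complex.one_im, Complex.I_re, Complex.I_im, Complex.conj_re,
    Complex.conj_im, Complex.star_def]
  field_simp
  simp only [Complex.normSq_apply, Complex.mul_re, Complex.mul_im, Complex.add_re,
    Complex.add_im, Complex.conj_re, Complex.conj_im, Complex.I_re, Complex.I_im, map_mul,
    Complex.conj_I, Complex.neg_im]
  ring

/-- For Weierstrass data `(f, g)` on an open set `U ⊆ ℂ`, the Gauss
curvature of the induced metric `λ²(dx² + dy²)` is computed in the isothermal
coordinate by `Δ(ln λ)(z) = −K(z) λ(z)²` for every `z ∈ U`, where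
`λ = |f|(1 + |g|²)/2` and `K = −(4|g'| / (|f|(1 + |g|²)²))²`. -/
theorem weierstrass_gauss_curvature_eq
    (U : Set ℂ) (hU : IsOpen U)
    (f g : ℂ → ℂ)
    (hf : DifferentiableOn ℂ f U) (hg : DifferentiableOn ℂ g U)
    (hf0 : ∀ z ∈ U, f z ≠ 0) (hg' : ∀ z ∈ U, deriv g z ≠ 0)
    (lam K : ℂ → ℝ)
    (hlam : ∀ z, lam z = ‖f z‖ * (1 + ‖g z‖ ^ 2) / 2)
    (hK : ∀ z, K z = -(4 * ‖deriv g z‖ /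
      (‖f z‖ * (1 + ‖g z‖ ^ 2) ^ 2)) ^ 2) :
    ∀ z ∈ U,
      flatLaplacian (fun w => Real.log (lam w)) z = -(K z) * lam z ^ 2 := by
  intro z hz
  have hUz : U ∈ 𝓝 z := hU.mem_nhds hz
  have hdf : ∀ᶠ w in 𝓝 z, DifferentiableAt ℂ f w :=
    eventually_of_mem hUz fun w hw => hf.differentiableAt (hU.mem_nhds hw)
  have hdg : ∀ᶠ w in 𝓝 z, DifferentiableAt ℂ g w :=
    eventually_of_mem hUz fun w hw => hg.differentiableAt (hU.mem_nhds hw)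
  have hd1f : DifferentiableAt ℂ (deriv f) z :=
    (((hf.analyticOnNhd hU).deriv) z hz).differentiableAt
  have hd1g : DifferentiableAt ℂ (deriv g) z :=
    (((hg.analyticOnNhd hU).deriv) z hz).differentiableAt
  have hfz := hf0 z hz
  have hposf : 0 < (0 : ℝ) + Complex.normSq (f z) := by
    simpa using Complex.normSq_pos.mpr hfz
  have hposg : 0 < (1 : ℝ) + Complex.normSq (g z) := by
    have := Complex.normSq_nonneg (g z); linarith
  obtain ⟨lapf, hdf1, hdfev⟩ := lap_log_add_normSq hdf hd1f hposf
  obtain ⟨lapg, hdg1, hdgev⟩ := lap_log_add_normSq hdg hd1g hposg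
  have hfne : ∀ᶠ w in 𝓝 z, f w ≠ 0 := (hdf.self_of_nhds.continuousAt).eventually_ne hfz
  have hlogeq : (fun w => Real.log (lam w)) =ᶠ[𝓝 z]
      (fun w => (1 / 2 : ℝ) * Real.log ((0 : ℝ) + Complex.normSq (f w)) +
        Real.log ((1 : ℝ) + Complex.normSq (g w)) + (-Real.log 2)) := by
    refine hfne.mono fun w hw => ?_
    have habs : (0 : ℝ) < ‖f w‖ := norm_pos_iff.mpr hw
    have h1 : (0 : ℝ) < 1 + ‖g w‖ ^ 2 := by positivity
    show Real.log (lam w) = 1 / 2 * Real.log ((0 : ℝ) + Complex.normSq (f w)) +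
      Real.log ((1 : ℝ) + Complex.normSq (g w)) + -Real.log 2
    rw [hlam w, Real.log_div (by positivity) two_ne_zero,
      Real.log_mul habs.ne' h1.ne', Complex.norm_def,
      Real.log_sqrt (Complex.normSq_nonneg _), Complex.sq_norm, zero_add]
    ring
  rw [flatLaplacian_congr hlogeq,
    flatLaplacian_combo (1 / 2) (-Real.log 2) hdfev hdgev (hdf1 1) (hdf1 Complex.I)
      (hdg1 1) (hdg1 Complex.I), lapf, lapg]
  rw [hK z, hlam z]
  have h2 : ‖f z‖ ≠ 0 := (norm_pos_iff.mpr hfz).ne'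
  have h3 : (0 : ℝ) < 1 + ‖g z‖ ^ 2 := by positivity
  simp only [← Complex.sq_norm]
  field_simp
  ring
end

section
/- Ricci's condition for minimal surfaces: let U ⊆ ℂ be open and let (f, g) be Weierstrass data on U. Then for every z ∈ U, Δ(ln(−K))(z) = 4 K(z) λ(z)²; equivalently, the Laplace–Beltrami operator λ⁻²Δ of the induced metric applied to ln(−K) equals 4K. -/
open Complex Topology Filter

noncomputable def ee (h : ℂ → ℂ) (c : ℝ) (w v : ℂ) : ℝ :=
  (c + Complex.normSq (h w))⁻¹ *
    (2 * ((starRingEnd ℂ) (h w) * (deriv h w * v)).re)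

lemma step1 {h : ℂ → ℂ} {V : Set ℂ} (hV : IsOpen V) (hh : DifferentiableOn ℂ h V)
    {c : ℝ} (hpos : ∀ w ∈ V, 0 < c + Complex.normSq (h w))
    {w : ℂ} (hw : w ∈ V) :
    DifferentiableAt ℝ (fun u => Real.log (c + Complex.normSq (h u))) w ∧
      ∀ v, fderiv ℝ (fun u => Real.log (c + Complex.normSq (h u))) w v = ee h c w v := by
  have hdw : DifferentiableAt ℂ h w := hh.differentiableAt (hV.mem_nhds hw)
  have hD : HasDerivAt h (deriv h w) w := hdw.hasDerivAt
  set Dh : ℂ →L[ℝ] ℂ := ((1 : ℂ →L[ℂ] ℂ).smulRight (deriv h w)).restrictScalars ℝ with hDh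
  have hF : HasFDerivAt h Dh w := hD.hasFDerivAt.restrictScalars ℝ
  have hconj : HasFDerivAt (fun u => (starRingEnd ℂ) (h u))
      (Complex.conjCLE.toContinuousLinearMap.comp Dh) w :=
    (Complex.conjCLE.toContinuousLinearMap.hasFDerivAt).comp w hF
  have hmul := hconj.mul hF
  have hre : HasFDerivAt (fun u => Complex.reCLM ((starRingEnd ℂ) (h u) * h u))
      (Complex.reCLM.comp ((starRingEnd ℂ) (h w) • Dh +
        h w • (Complex.conjCLE.toContinuousLinearMap.comp Dh))) w :=
    (Complex.reCLM.hasFDerivAt).comp w hmul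
  have hq : HasFDerivAt (fun u => c + Complex.normSq (h u))
      (Complex.reCLM.comp ((starRingEnd ℂ) (h w) • Dh +
        h w • (Complex.conjCLE.toContinuousLinearMap.comp Dh))) w := by
    have heq : (fun u => c + Complex.normSq (h u))
        = fun u => c + Complex.reCLM ((starRingEnd ℂ) (h u) * h u) := by
      funext u
      simp [Complex.normSq_apply, Complex.mul_re]
    rw [heq]
    exact hre.const_add c
  have hlog := hq.log (ne_of_gt (hpos w hw))
  refine ⟨hlog.differentiableAt, fun v => ?_⟩
  rw [hlog.fderiv]
  simp [ee, hDh, Complex.mul_re, Complex.normSq_apply, smul_eq_mul]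
  ring

noncomputable def e2 (h : ℂ → ℂ) (c : ℝ) (z v : ℂ) : ℝ :=
  (c + Complex.normSq (h z))⁻¹ *
      (2 * ((starRingEnd ℂ) (h z) * (deriv (deriv h) z * v * v)
        + (deriv h z * v) * (starRingEnd ℂ) (deriv h z * v)).re)
    - ((c + Complex.normSq (h z)) ^ 2)⁻¹ *
      (2 * ((starRingEnd ℂ) (h z) * (deriv h z * v)).re) *
      (2 * ((starRingEnd ℂ) (h z) * (deriv h z * v)).re)

lemma step2 {h : ℂ → ℂ} {V : Set ℂ} (hV : IsOpen V) (hh : DifferentiableOn ℂ h V)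
    {c : ℝ} (hpos : ∀ w ∈ V, 0 < c + Complex.normSq (h w))
    {z : ℂ} (hz : z ∈ V) (v : ℂ) :
    DifferentiableAt ℝ (fun w => ee h c w v) z ∧
      fderiv ℝ (fun w => ee h c w v) z v = e2 h c z v := by
  have hdz : DifferentiableAt ℂ h z := hh.differentiableAt (hV.mem_nhds hz)
  have h1d : DifferentiableAt ℂ (deriv h) z :=
    (((hh.analyticOnNhd hV).deriv) z hz).differentiableAt
  set Dh : ℂ →L[ℝ] ℂ := ((1 : ℂ →L[ℂ] ℂ).smulRight (deriv h z)).restrictScalars ℝ with hDh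
  set Dh1 : ℂ →L[ℝ] ℂ :=
    ((1 : ℂ →L[ℂ] ℂ).smulRight (deriv (deriv h) z)).restrictScalars ℝ with hDh1
  have hF : HasFDerivAt h Dh z := hdz.hasDerivAt.hasFDerivAt.restrictScalars ℝ
  have hF1 : HasFDerivAt (deriv h) Dh1 z := h1d.hasDerivAt.hasFDerivAt.restrictScalars ℝ
  have hconj : HasFDerivAt (fun u => (starRingEnd ℂ) (h u))
      (Complex.conjCLE.toContinuousLinearMap.comp Dh) z :=
    (Complex.conjCLE.toContinuousLinearMap.hasFDerivAt).comp z hF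
  have hq : HasFDerivAt (fun u => c + Complex.normSq (h u))
      (Complex.reCLM.comp ((starRingEnd ℂ) (h z) • Dh +
        h z • (Complex.conjCLE.toContinuousLinearMap.comp Dh))) z := by
    have heq : (fun u => c + Complex.normSq (h u))
        = fun u => c + Complex.reCLM ((starRingEnd ℂ) (h u) * h u) := by
      funext u
      simp [Complex.normSq_apply, Complex.mul_re]
    rw [heq]
    exact ((Complex.reCLM.hasFDerivAt).comp z (hconj.mul hF)).const_add c
  have hA := (hasDerivAt_inv (ne_of_gt (hpos z hz))).comp_hasFDerivAt z hq
  have hmv : HasFDerivAt (fun w => deriv h w * v) (v • Dh1) z := by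
    simpa using hF1.mul_const v
  have hmul2 := hconj.mul hmv
  have hB := ((Complex.reCLM.hasFDerivAt).comp z hmul2).const_mul (2 : ℝ)
  have hAB := hA.mul hB
  have heq2 : (fun w => ee h c w v)
      = fun w => (c + Complex.normSq (h w))⁻¹ *
          (2 * Complex.reCLM ((starRingEnd ℂ) (h w) * (deriv h w * v))) := by
    funext w
    simp [ee]
  have hAB' : HasFDerivAt
      (fun w => (c + Complex.normSq (h w))⁻¹ *
        (2 * Complex.reCLM ((starRingEnd ℂ) (h w) * (deriv h w * v))))
      (((c + Complex.normSq (h z))⁻¹) •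
        ((2:ℝ) • Complex.reCLM.comp ((starRingEnd ℂ) (h z) • v • Dh1 +
          (deriv h z * v) • Complex.conjCLE.toContinuousLinearMap.comp Dh)) +
        (2 * Complex.reCLM ((starRingEnd ℂ) (h z) * (deriv h z * v))) •
          (-((c + Complex.normSq (h z)) ^ 2)⁻¹ •
            Complex.reCLM.comp ((starRingEnd ℂ) (h z) • Dh +
              h z • Complex.conjCLE.toContinuousLinearMap.comp Dh))) z := hAB
  rw [heq2]
  refine ⟨hAB'.differentiableAt, ?_⟩
  rw [hAB'.fderiv]
  simp [e2, hDh, hDh1, Complex.mul_re, Complex.mul_im, Complex.normSq_apply, smul_eq_mul,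
    Complex.conj_re, Complex.conj_im]
  ring

lemma lap_alg (h : ℂ → ℂ) (c : ℝ) (z : ℂ) (hq : 0 < c + Complex.normSq (h z)) :
    e2 h c z 1 + e2 h c z Complex.I
      = 4 * c * Complex.normSq (deriv h z) / (c + Complex.normSq (h z)) ^ 2 := by
  have hne : c + Complex.normSq (h z) ≠ 0 := ne_of_gt hq
  simp only [e2]
  set q := c + Complex.normSq (h z) with hqdef
  simp only [Complex.add_re, Complex.mul_re, Complex.mul_im, Complex.conj_re, Complex.conj_im,
    Complex.I_re, Complex.I_im, Complex.one_re, Complex.one_im, Complex.normSq_apply]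
  have hq2 : q - c = (h z).re ^ 2 + (h z).im ^ 2 := by
    rw [hqdef, Complex.normSq_apply]; ring
  clear_value q
  obtain rfl : c = q - ((h z).re ^ 2 + (h z).im ^ 2) := by linarith
  field_simp
  ring


/-- Ricci's condition: for Weierstrass data `(f, g)` on an open set
`U ⊆ ℂ`, with `λ = |f|(1 + |g|²)/2` and `K = −(4|g'| / (|f|(1 + |g|²)²))²`, one
has `Δ(ln(−K))(z) = 4 K(z) λ(z)²` for every `z ∈ U`; equivalently, the
Laplace–Beltrami operator `λ⁻²Δ` of the induced metric applied to `ln(−K)`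
equals `4K`. -/
theorem ricci_condition
    (U : Set ℂ) (hU : IsOpen U)
    (f g : ℂ → ℂ)
    (hf : DifferentiableOn ℂ f U) (hg : DifferentiableOn ℂ g U)
    (hf0 : ∀ z ∈ U, f z ≠ 0) (hg' : ∀ z ∈ U, deriv g z ≠ 0)
    (lam K : ℂ → ℝ)
    (hlam : ∀ z, lam z = ‖f z‖ * (1 + ‖g z‖ ^ 2) / 2)
    (hK : ∀ z, K z = -(4 * ‖deriv g z‖ /
      (‖f z‖ * (1 + ‖g z‖ ^ 2) ^ 2)) ^ 2) :
    ∀ z ∈ U,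
      flatLaplacian (fun w => Real.log (-(K w))) z = 4 * K z * lam z ^ 2 ∧
      (lam z ^ 2)⁻¹ * flatLaplacian (fun w => Real.log (-(K w))) z = 4 * K z := by
  intro z hz
  set V : Set ℂ := U ∩ deriv g ⁻¹' {0}ᶜ with hVdef
  have hVopen : IsOpen V :=
    ((hg.analyticOnNhd hU).deriv).continuousOn.isOpen_inter_preimage hU isOpen_compl_singleton
  have hzV : z ∈ V := ⟨hz, by simpa using hg' z hz⟩
  have hVU : V ⊆ U := Set.inter_subset_left
  have hfV : DifferentiableOn ℂ f V := hf.mono hVU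
  have hgV : DifferentiableOn ℂ g V := hg.mono hVU
  have hg1V : DifferentiableOn ℂ (deriv g) V :=
    (((hg.analyticOnNhd hU).deriv).differentiableOn).mono hVU
  have hp1 : ∀ w ∈ V, 0 < 0 + Complex.normSq (deriv g w) := by
    intro w hw
    have : deriv g w ≠ 0 := by simpa using hw.2
    simpa using Complex.normSq_pos.2 this
  have hp2 : ∀ w ∈ V, 0 < 0 + Complex.normSq (f w) := by
    intro w hw
    simpa using Complex.normSq_pos.2 (hf0 w (hVU hw))
  have hp3 : ∀ w ∈ V, 0 < 1 + Complex.normSq (g w) := by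
    intro w hw
    have := Complex.normSq_nonneg (g w)
    linarith
  have hVnhds : V ∈ 𝓝 z := hVopen.mem_nhds hzV
  set Fd : ℂ → ℝ := fun w => Real.log 16 + Real.log ((0:ℝ) + Complex.normSq (deriv g w)) -
      Real.log ((0:ℝ) + Complex.normSq (f w)) - 4 * Real.log (1 + Complex.normSq (g w))
    with hFd
  have hlogeq : ∀ w ∈ V, Real.log (-(K w)) = Fd w := by
    intro w hw
    have ha : (0:ℝ) < ‖deriv g w‖ := by
      have : deriv g w ≠ 0 := by simpa using hw.2
      simpa using norm_pos_iff.mpr this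
    have hb : (0:ℝ) < ‖f w‖ := norm_pos_iff.mpr (hf0 w (hVU hw))
    have hs : (0:ℝ) < 1 + ‖g w‖ ^ 2 := by positivity
    have h1 : -(K w) = 16 * ((0:ℝ) + Complex.normSq (deriv g w)) /
        (((0:ℝ) + Complex.normSq (f w)) * (1 + Complex.normSq (g w)) ^ 4) := by
      rw [hK w, neg_neg, ← Complex.sq_norm, ← Complex.sq_norm (f w), ← Complex.sq_norm (g w)]
      field_simp
      ring
    have n1 := hp1 w hw
    have n2 := hp2 w hw
    have n3 := hp3 w hw
    rw [h1, Real.log_div (ne_of_gt (mul_pos (by norm_num) n1))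
        (ne_of_gt (mul_pos n2 (pow_pos n3 4))),
      Real.log_mul (by norm_num) (ne_of_gt n1),
      Real.log_mul (ne_of_gt n2) (ne_of_gt (pow_pos n3 4)), Real.log_pow, hFd]
    push_cast
    ring
  have hFeq : (fun w => Real.log (-(K w))) =ᶠ[𝓝 z] Fd :=
    Filter.eventuallyEq_of_mem hVnhds hlogeq
  have hcomb : ∀ w ∈ V, ∀ v, fderiv ℝ Fd w v =
      ee (deriv g) 0 w v - ee f 0 w v - 4 * ee g 1 w v := by
    intro w hw v
    obtain ⟨d1, e1⟩ := step1 hVopen hg1V hp1 hw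
    obtain ⟨d2, e2'⟩ := step1 hVopen hfV hp2 hw
    obtain ⟨d3, e3⟩ := step1 hVopen hgV hp3 hw
    have hsplit : fderiv ℝ Fd w =
        fderiv ℝ (fun u => Real.log ((0:ℝ) + Complex.normSq (deriv g u))) w -
        fderiv ℝ (fun u => Real.log ((0:ℝ) + Complex.normSq (f u))) w -
        (4:ℝ) • fderiv ℝ (fun u => Real.log (1 + Complex.normSq (g u))) w := by
      rw [hFd]
      rw [fderiv_fun_sub ((d1.const_add _).fun_sub d2) (d3.const_mul _),
        fderiv_fun_sub (d1.const_add _) d2, fderiv_const_add, fderiv_const_mul d3]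
    rw [hsplit]
    simp only [ContinuousLinearMap.sub_apply, ContinuousLinearMap.smul_apply, smul_eq_mul]
    rw [e1 v, e2' v, e3 v]
  have hv : ∀ v : ℂ, (fun w => fderiv ℝ (fun u => Real.log (-(K u))) w v) =ᶠ[𝓝 z]
      (fun w => ee (deriv g) 0 w v - ee f 0 w v - 4 * ee g 1 w v) := by
    intro v
    filter_upwards [hFeq.fderiv (𝕜 := ℝ), hVnhds] with w hw1 hw2
    rw [hw1]
    exact hcomb w hw2 v
  have hsecond : ∀ v : ℂ,
      fderiv ℝ (fun w => fderiv ℝ (fun u => Real.log (-(K u))) w v) z v =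
        e2 (deriv g) 0 z v - e2 f 0 z v - 4 * e2 g 1 z v := by
    intro v
    rw [(hv v).fderiv_eq]
    obtain ⟨d1, e1⟩ := step2 hVopen hg1V hp1 hzV v
    obtain ⟨d2, e2'⟩ := step2 hVopen hfV hp2 hzV v
    obtain ⟨d3, e3⟩ := step2 hVopen hgV hp3 hzV v
    rw [fderiv_fun_sub (d1.fun_sub d2) (d3.const_mul _), fderiv_fun_sub d1 d2, fderiv_const_mul d3]
    simp only [ContinuousLinearMap.sub_apply, ContinuousLinearMap.smul_apply, smul_eq_mul]
    rw [e1, e2', e3]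
  have hlap : flatLaplacian (fun w => Real.log (-(K w))) z =
      -16 * Complex.normSq (deriv g z) / (1 + Complex.normSq (g z)) ^ 2 := by
    rw [flatLaplacian, hsecond 1, hsecond Complex.I]
    have A1 := lap_alg (deriv g) 0 z (hp1 z hzV)
    have A2 := lap_alg f 0 z (hp2 z hzV)
    have A3 := lap_alg g 1 z (hp3 z hzV)
    have : (e2 (deriv g) 0 z 1 + e2 (deriv g) 0 z Complex.I) -
        (e2 f 0 z 1 + e2 f 0 z Complex.I) -
        4 * (e2 g 1 z 1 + e2 g 1 z Complex.I) =
        -16 * Complex.normSq (deriv g z) / (1 + Complex.normSq (g z)) ^ 2 := by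
      rw [A1, A2, A3]
      field_simp
      ring
    linarith [this]
  have hbne : ‖f z‖ ≠ 0 := norm_ne_zero_iff.mpr (hf0 z hz)
  have hsne : (1:ℝ) + ‖g z‖ ^ 2 ≠ 0 := by positivity
  have hmain : flatLaplacian (fun w => Real.log (-(K w))) z = 4 * K z * lam z ^ 2 := by
    rw [hlap, hK z, hlam z, ← Complex.sq_norm (deriv g z), ← Complex.sq_norm (g z)]
    field_simp
    ring
  refine ⟨hmain, ?_⟩
  have hlamne : lam z ≠ 0 := by
    rw [hlam z]
    exact div_ne_zero (mul_ne_zero hbne hsne) two_ne_zero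
  rw [hmain]
  field_simp
end

section
/- Flatness of Ricci's metric: let U ⊆ ℂ be open and let (f, g) be Weierstrass data on U. Then the function z ↦ ln((−K(z))^{1/4} λ(z)) is harmonic on U, i.e. Δ(ln((−K)^{1/4} λ)) = 0 on U. (Since the Gauss curvature of a conformal metric μ²(dx² + dy²) is −μ⁻²Δ ln μ, this says that Ricci's conformally changed metric 𝒢_Ricci = (−K)^{1/2} λ²(dx² + dy²) is flat.) -/
lemma fderiv_re_comp (G : ℂ → ℂ) (w : ℂ) (hG : DifferentiableAt ℂ G w) (v : ℂ) :
    fderiv ℝ (fun x => (G x).re) w v = (deriv G w * v).re := by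
  have h1 : HasFDerivAt G
      ((ContinuousLinearMap.smulRight (1 : ℂ →L[ℂ] ℂ) (deriv G w)).restrictScalars ℝ) w :=
    (hG.hasDerivAt.hasFDerivAt).restrictScalars ℝ
  have h2 : HasFDerivAt (fun x => (G x).re)
      (Complex.reCLM.comp ((ContinuousLinearMap.smulRight (1 : ℂ →L[ℂ] ℂ)
        (deriv G w)).restrictScalars ℝ)) w := Complex.reCLM.hasFDerivAt.comp w h1
  rw [h2.fderiv]
  simp [mul_comm]

lemma flatLaplacian_congr_s4 {F₁ F₂ : ℂ → ℝ} {z : ℂ} (h : F₁ =ᶠ[nhds z] F₂) :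
    flatLaplacian F₁ z = flatLaplacian F₂ z := by
  have hd : fderiv ℝ F₁ =ᶠ[nhds z] fderiv ℝ F₂ := h.fderiv
  have e1 : (fun w => fderiv ℝ F₁ w 1) =ᶠ[nhds z] (fun w => fderiv ℝ F₂ w 1) :=
    hd.mono fun w hw => by simp [hw]
  have e2 : (fun w => fderiv ℝ F₁ w Complex.I) =ᶠ[nhds z] (fun w => fderiv ℝ F₂ w Complex.I) :=
    hd.mono fun w hw => by simp [hw]
  unfold flatLaplacian
  rw [e1.fderiv_eq, e2.fderiv_eq]

lemma harmonic_re_of_holo (L : ℂ → ℂ) (V : Set ℂ) (hV : IsOpen V)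
    (hL : DifferentiableOn ℂ L V) (z : ℂ) (hz : z ∈ V) :
    flatLaplacian (fun w => (L w).re) z = 0 := by
  have hA : AnalyticOnNhd ℂ L V := hL.analyticOnNhd hV
  have hL' : ∀ w ∈ V, DifferentiableAt ℂ L w := fun w hw => (hA w hw).differentiableAt
  have hD : ∀ w ∈ V, DifferentiableAt ℂ (deriv L) w := fun w hw =>
    ((hA.deriv) w hw).differentiableAt
  have e1 : (fun w => fderiv ℝ (fun x => (L x).re) w 1)
      =ᶠ[nhds z] (fun w => (deriv L w * 1).re) := by
    filter_upwards [hV.mem_nhds hz] with w hw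
    exact fderiv_re_comp L w (hL' w hw) 1
  have e2 : (fun w => fderiv ℝ (fun x => (L x).re) w Complex.I)
      =ᶠ[nhds z] (fun w => (deriv L w * Complex.I).re) := by
    filter_upwards [hV.mem_nhds hz] with w hw
    exact fderiv_re_comp L w (hL' w hw) Complex.I
  unfold flatLaplacian
  rw [e1.fderiv_eq, e2.fderiv_eq]
  have h1 : fderiv ℝ (fun w => (deriv L w * 1).re) z 1
      = (deriv (fun w => deriv L w * 1) z * 1).re :=
    fderiv_re_comp _ z ((hD z hz).mul_const 1) 1
  have h2 : fderiv ℝ (fun w => (deriv L w * Complex.I).re) z Complex.I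
      = (deriv (fun w => deriv L w * Complex.I) z * Complex.I).re :=
    fderiv_re_comp _ z ((hD z hz).mul_const Complex.I) Complex.I
  rw [h1, h2, deriv_mul_const (hD z hz), deriv_mul_const (hD z hz)]
  have : deriv (deriv L) z * Complex.I * Complex.I = -(deriv (deriv L) z) := by
    rw [mul_assoc, Complex.I_mul_I, mul_neg_one]
  rw [this]
  simp

/-- Flatness of Ricci's metric: for Weierstrass data `(f, g)` on an
open set `U ⊆ ℂ`, with `λ = |f|(1 + |g|²)/2` and
`K = −(4|g'| / (|f|(1 + |g|²)²))²`, the function `z ↦ ln((−K(z))^{1/4} λ(z))` is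
harmonic on `U`: `Δ(ln((−K)^{1/4} λ)) = 0` on `U`.  This says that Ricci's
conformally changed metric `𝒢_Ricci = (−K)^{1/2} λ²(dx² + dy²)` is flat. -/
theorem ricci_metric_flat
    (U : Set ℂ) (hU : IsOpen U)
    (f g : ℂ → ℂ)
    (hf : DifferentiableOn ℂ f U) (hg : DifferentiableOn ℂ g U)
    (hf0 : ∀ z ∈ U, f z ≠ 0) (hg' : ∀ z ∈ U, deriv g z ≠ 0)
    (lam K : ℂ → ℝ)
    (hlam : ∀ z, lam z = ‖f z‖ * (1 + ‖g z‖ ^ 2) / 2)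
    (hK : ∀ z, K z = -(4 * ‖deriv g z‖ /
      (‖f z‖ * (1 + ‖g z‖ ^ 2) ^ 2)) ^ 2) :
    ∀ z ∈ U,
      flatLaplacian (fun w => Real.log ((-(K w)) ^ ((1 : ℝ) / 4) * lam w)) z = 0 := by
  intro z hz
  -- h = f * g' is holomorphic and nonvanishing on U
  set h : ℂ → ℂ := fun w => f w * deriv g w with hh
  have hgA : AnalyticOnNhd ℂ g U := hg.analyticOnNhd hU
  have hg'diff : DifferentiableOn ℂ (deriv g) U := fun w hw =>
    ((hgA.deriv) w hw).differentiableAt.differentiableWithinAt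
  have hhdiff : DifferentiableOn ℂ h U := hf.mul hg'diff
  have hh0 : ∀ w ∈ U, h w ≠ 0 := fun w hw => mul_ne_zero (hf0 w hw) (hg' w hw)
  set c : ℂ := h z / (‖h z‖ : ℂ) with hc
  have hc0 : c ≠ 0 := div_ne_zero (hh0 z hz) (by
    simpa using (norm_ne_zero_iff.mpr (hh0 z hz)))
  have hcabs : ‖c‖ = 1 := by
    rw [hc, norm_div]
    simp [norm_ne_zero_iff.mpr (hh0 z hz)]
  -- the open neighborhood V
  set V : Set ℂ := U ∩ (fun w => h w / c) ⁻¹' Complex.slitPlane with hV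
  have hVopen : IsOpen V :=
    (hhdiff.continuousOn.div_const c).isOpen_inter_preimage hU Complex.isOpen_slitPlane
  have hzV : z ∈ V := by
    refine ⟨hz, ?_⟩
    show h z / c ∈ Complex.slitPlane
    have : h z / c = (‖h z‖ : ℂ) := by
      rw [hc, div_div_eq_mul_div, mul_comm, mul_div_assoc, div_self (hh0 z hz), mul_one]
    rw [this]
    exact Complex.ofReal_mem_slitPlane.2 (by
      simpa using (norm_pos_iff.mpr (hh0 z hz)))
  -- the holomorphic logarithm
  set L : ℂ → ℂ := fun w => (1 / 2 : ℂ) * Complex.log (h w / c) with hL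
  have hLdiff : DifferentiableOn ℂ L V := by
    intro w hw
    have hd : DifferentiableAt ℂ (fun x => h x / c) w :=
      ((hhdiff w hw.1).differentiableAt (hU.mem_nhds hw.1)).div_const c
    exact (((Complex.differentiableAt_log hw.2).comp w hd).const_mul _).differentiableWithinAt
  -- pointwise identity on V
  have hkey : ∀ w ∈ V, Real.log ((-(K w)) ^ ((1 : ℝ) / 4) * lam w) = (L w).re := by
    intro w hw
    obtain ⟨hwU, hwS⟩ := hw
    set a := ‖f w‖ with ha
    set b := 1 + ‖g w‖ ^ 2 with hb
    set d := ‖deriv g w‖ with hd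
    have ha0 : 0 < a := norm_pos_iff.mpr (hf0 w hwU)
    have hb0 : 0 < b := by positivity
    have hd0 : 0 < d := norm_pos_iff.mpr (hg' w hwU)
    set X : ℝ := 4 * d / (a * b ^ 2) with hX
    have hX0 : 0 < X := by positivity
    have hKX : -(K w) = X ^ 2 := by rw [hK w, hX, ha, hb, hd]; ring
    have habs : ‖h w‖ = a * d := by
      rw [hh]; exact norm_mul _ _
    have h1 : (-(K w)) ^ ((1 : ℝ) / 4) = Real.sqrt X := by
      rw [hKX, ← Real.rpow_natCast X 2, ← Real.rpow_mul hX0.le,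
        Real.sqrt_eq_rpow]
      norm_num
    have h2 : Real.sqrt X * lam w = Real.sqrt (a * d) := by
      rw [hlam w, ← ha, ← hb]
      have hnn : (0:ℝ) ≤ a * b / 2 := by positivity
      rw [show a * b / 2 = Real.sqrt ((a * b / 2) ^ 2) from
        (Real.sqrt_sq hnn).symm, ← Real.sqrt_mul hX0.le]
      congr 1
      field_simp [hX]
      rw [hX, div_mul_eq_mul_div, div_mul_eq_mul_div, div_eq_iff (by positivity)]; ring
    have h3 : (L w).re = Real.log (a * d) / 2 := by
      have : ‖h w / c‖ = a * d := by
        rw [norm_div, hcabs, div_one, habs]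
      simp [hL, Complex.log_re, this, Complex.div_re]
      rw [hcabs, div_one, habs]; ring
    rw [h1, h2, h3, Real.log_sqrt (by positivity)]
  have heq : (fun w => Real.log ((-(K w)) ^ ((1 : ℝ) / 4) * lam w))
      =ᶠ[nhds z] (fun w => (L w).re) := by
    filter_upwards [hVopen.mem_nhds hzV] with w hw
    exact hkey w hw
  rw [flatLaplacian_congr_s4 heq]
  exact harmonic_re_of_holo L V hVopen hLdiff z hzV
end

section
/- Chern's identity: let U ⊆ ℂ be open, let (f, g) be Weierstrass data on U with moreover g(z) ≠ 0 for every z ∈ U, and let N_V be the angle function for V = (0, 0, 1), namely N_V(z) = (|g(z)|² − 1)/(1 + |g(z)|²), so that 1 + N_V(z) = 2|g(z)|²/(1 + |g(z)|²) > 0. Then for every z ∈ U, Δ(ln(1 + N_V))(z) = K(z) λ(z)²; equivalently, the Laplace–Beltrami operator λ⁻²Δ of the induced metric applied to ln(1 + N_V) equals K. -/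
open Complex Filter

/-- Multiplication by a complex number, as a real-linear CLM `ℂ →L[ℝ] ℂ`. -/
noncomputable def cdCLM (a : ℂ) : ℂ →L[ℝ] ℂ :=
  ContinuousLinearMap.restrictScalars ℝ (a • (1 : ℂ →L[ℂ] ℂ))

@[simp] lemma cdCLM_apply (a v : ℂ) : cdCLM a v = a * v := by
  simp [cdCLM]

/-- `v ↦ (a * v).re` as a CLM. -/
noncomputable def rdCLM (a : ℂ) : ℂ →L[ℝ] ℝ :=
  Complex.reCLM.comp (cdCLM a)

@[simp] lemma rdCLM_apply (a v : ℂ) : rdCLM a v = (a * v).re := by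
  simp [rdCLM]

lemma hasFDerivAt_cd {g : ℂ → ℂ} {z : ℂ} (hg : DifferentiableAt ℂ g z) :
    HasFDerivAt g (cdCLM (deriv g z)) z := by
  have h := hg.hasDerivAt.hasFDerivAt.restrictScalars ℝ
  refine h.congr_fderiv ?_
  ext v
  simp [cdCLM, mul_comm]

lemma hasFDerivAt_normSq_comp {g : ℂ → ℂ} {z : ℂ} (hg : DifferentiableAt ℂ g z) :
    HasFDerivAt (fun x => Complex.normSq (g x))
      ((2 : ℝ) • rdCLM ((starRingEnd ℂ) (g z) * deriv g z)) z := by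
  have h0 := hasFDerivAt_cd hg
  have hre : HasFDerivAt (fun x => (g x).re) (Complex.reCLM.comp (cdCLM (deriv g z))) z :=
    Complex.reCLM.hasFDerivAt.comp z h0
  have him : HasFDerivAt (fun x => (g x).im) (Complex.imCLM.comp (cdCLM (deriv g z))) z :=
    Complex.imCLM.hasFDerivAt.comp z h0
  have H := (hre.mul hre).add (him.mul him)
  have hfun : (fun x => Complex.normSq (g x))
      = fun x => (g x).re * (g x).re + (g x).im * (g x).im := by
    funext x; simp [Complex.normSq_apply]
  rw [hfun]
  refine H.congr_fderiv ?_
  ext v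
  simp [Complex.mul_re, Complex.mul_im]
  ring

/-- First derivative of `log (c + |g|²)` at points of `U`. -/
lemma firstDeriv {U : Set ℂ} (hU : IsOpen U) {g : ℂ → ℂ} (hg : DifferentiableOn ℂ g U)
    (c : ℝ) (hc : ∀ w ∈ U, 0 < c + Complex.normSq (g w)) {w : ℂ} (hw : w ∈ U) :
    HasFDerivAt (fun x => Real.log (c + Complex.normSq (g x)))
      ((c + Complex.normSq (g w))⁻¹ •
        ((2 : ℝ) • rdCLM ((starRingEnd ℂ) (g w) * deriv g w))) w := by
  have hga : DifferentiableAt ℂ g w := (hg w hw).differentiableAt (hU.mem_nhds hw)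
  have hns := (hasFDerivAt_normSq_comp hga).const_add c
  have := hns.log (ne_of_gt (hc w hw))
  simpa using this

/-- Second derivative data for `log (c + |g|²)`. -/
lemma key {U : Set ℂ} (hU : IsOpen U) {g : ℂ → ℂ} (hg : DifferentiableOn ℂ g U)
    (c : ℝ) (hc : ∀ w ∈ U, 0 < c + Complex.normSq (g w)) {z : ℂ} (hz : z ∈ U) (v : ℂ) :
    ∃ Φ : ℂ →L[ℝ] ℝ,
      HasFDerivAt (fun w => fderiv ℝ (fun x => Real.log (c + Complex.normSq (g x))) w v) Φ z ∧
      Φ v = 2 * (v * (((starRingEnd ℂ) (deriv g z * v)) * deriv g z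
                 + (starRingEnd ℂ) (g z) * (deriv (deriv g) z * v))).re
               / (c + Complex.normSq (g z))
            - (2 * (v * ((starRingEnd ℂ) (g z) * deriv g z)).re) ^ 2
               / (c + Complex.normSq (g z)) ^ 2 := by
  have hUz : U ∈ nhds z := hU.mem_nhds hz
  have hga : DifferentiableAt ℂ g z := (hg z hz).differentiableAt hUz
  have hb : DifferentiableOn ℂ (deriv g) U := ((hg.analyticOnNhd hU).deriv).differentiableOn
  have hbz : DifferentiableAt ℂ (deriv g) z := (hb z hz).differentiableAt hUz
  set ψ : ℂ → ℝ := fun w =>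
    2 * (rdCLM v) ((starRingEnd ℂ) (g w) * deriv g w) * (c + Complex.normSq (g w))⁻¹ with hψ
  have hE : (fun w => fderiv ℝ (fun x => Real.log (c + Complex.normSq (g x))) w v)
      =ᶠ[nhds z] ψ := by
    filter_upwards [hUz] with w hw
    rw [(firstDeriv hU hg c hc hw).fderiv]
    simp only [hψ, ContinuousLinearMap.smul_apply, rdCLM_apply, smul_eq_mul]
    rw [mul_comm ((starRingEnd ℂ) (g w) * deriv g w) v]
    ring
  have hconj : HasFDerivAt (fun w => (starRingEnd ℂ) (g w))
      (((Complex.conjCLE : ℂ ≃L[ℝ] ℂ) : ℂ →L[ℝ] ℂ).comp (cdCLM (deriv g z))) z :=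
    ((Complex.conjCLE : ℂ ≃L[ℝ] ℂ) : ℂ →L[ℝ] ℂ).hasFDerivAt.comp z (hasFDerivAt_cd hga)
  have hq : HasFDerivAt (fun w => (starRingEnd ℂ) (g w) * deriv g w)
      (((starRingEnd ℂ) (g z)) • cdCLM (deriv (deriv g) z)
        + ((((Complex.conjCLE : ℂ ≃L[ℝ] ℂ) : ℂ →L[ℝ] ℂ).comp
            (cdCLM (deriv g z))).smulRight (deriv g z))) z :=
    hconj.mul' (hasFDerivAt_cd hbz)
  have hnum := ((rdCLM v).hasFDerivAt.comp z hq).const_mul (2 : ℝ)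
  have hden : HasFDerivAt (fun w => c + Complex.normSq (g w))
      ((2 : ℝ) • rdCLM ((starRingEnd ℂ) (g z) * deriv g z)) z :=
    (hasFDerivAt_normSq_comp hga).const_add c
  have hinv : HasFDerivAt (fun w => (c + Complex.normSq (g w))⁻¹)
      ((-(( c + Complex.normSq (g z)) ^ 2)⁻¹) •
        ((2 : ℝ) • rdCLM ((starRingEnd ℂ) (g z) * deriv g z))) z :=
    (hasDerivAt_inv (ne_of_gt (hc z hz))).comp_hasFDerivAt z hden
  have hmul := hnum.mul hinv
  refine ⟨_, (hmul.congr_of_eventuallyEq hE : _), ?_⟩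
  have hs : (c + Complex.normSq (g z)) ≠ 0 := ne_of_gt (hc z hz)
  simp only [ContinuousLinearMap.add_apply, ContinuousLinearMap.smul_apply,
    ContinuousLinearMap.coe_comp', Function.comp_apply, ContinuousLinearMap.coe_smul',
    Pi.smul_apply, ContinuousLinearMap.smulRight_apply, rdCLM_apply, cdCLM_apply,
    ContinuousLinearEquiv.coe_coe, Complex.conjCLE_apply, smul_eq_mul, Complex.mul_re, Complex.mul_im,
    Complex.add_re, Complex.add_im, Complex.conj_re, Complex.conj_im, Complex.normSq_apply]
  field_simp
  ring

/-- Chern's identity: for Weierstrass data `(f, g)` on an open set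
`U ⊆ ℂ` with moreover `g ≠ 0` on `U`, and the angle function for `V = (0,0,1)`,
`N_V = (|g|² − 1)/(1 + |g|²)` (so `1 + N_V = 2|g|²/(1 + |g|²) > 0`), one has
`Δ(ln(1 + N_V))(z) = K(z) λ(z)²` for every `z ∈ U`; equivalently, the
Laplace–Beltrami operator `λ⁻²Δ` of the induced metric applied to `ln(1 + N_V)`
equals `K`. -/
theorem chern_identity
    (U : Set ℂ) (hU : IsOpen U)
    (f g : ℂ → ℂ)
    (hf : DifferentiableOn ℂ f U) (hg : DifferentiableOn ℂ g U)
    (hf0 : ∀ z ∈ U, f z ≠ 0) (hg' : ∀ z ∈ U, deriv g z ≠ 0)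
    (hg0 : ∀ z ∈ U, g z ≠ 0)
    (lam K Nv : ℂ → ℝ)
    (hlam : ∀ z, lam z = ‖f z‖ * (1 + ‖g z‖ ^ 2) / 2)
    (hK : ∀ z, K z = -(4 * ‖deriv g z‖ /
      (‖f z‖ * (1 + ‖g z‖ ^ 2) ^ 2)) ^ 2)
    (hNv : ∀ z, Nv z = (‖g z‖ ^ 2 - 1) / (1 + ‖g z‖ ^ 2)) :
    ∀ z ∈ U,
      flatLaplacian (fun w => Real.log (1 + Nv w)) z = K z * lam z ^ 2 ∧
      (lam z ^ 2)⁻¹ * flatLaplacian (fun w => Real.log (1 + Nv w)) z = K z := by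
  intro z hz
  have hUz : U ∈ nhds z := hU.mem_nhds hz
  have hc0 : ∀ w ∈ U, 0 < 0 + Complex.normSq (g w) := fun w hw => by
    simpa using Complex.normSq_pos.2 (hg0 w hw)
  have hc1 : ∀ w ∈ U, 0 < 1 + Complex.normSq (g w) := fun w hw => by
    have := Complex.normSq_nonneg (g w); linarith
  -- pointwise identity
  have hF : ∀ w ∈ U, Real.log (1 + Nv w)
      = Real.log 2 + (Real.log (0 + Complex.normSq (g w)) - Real.log (1 + Complex.normSq (g w))) := by
    intro w hw
    have hn : 0 < Complex.normSq (g w) := Complex.normSq_pos.2 (hg0 w hw)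
    have h1 : 1 + Nv w = 2 * Complex.normSq (g w) / (1 + Complex.normSq (g w)) := by
      rw [hNv, Complex.sq_norm]
      field_simp
      ring
    rw [h1, Real.log_div (by positivity) (by positivity),
      Real.log_mul two_ne_zero (ne_of_gt hn), zero_add]
    ring
  -- first derivatives split
  have hFd : ∀ vv : ℂ, ∀ w ∈ U,
      fderiv ℝ (fun x => Real.log (1 + Nv x)) w vv
        = fderiv ℝ (fun x => Real.log (0 + Complex.normSq (g x))) w vv
          - fderiv ℝ (fun x => Real.log (1 + Complex.normSq (g x))) w vv := by
    intro vv w hw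
    have hA := firstDeriv hU hg 0 hc0 hw
    have hB := firstDeriv hU hg 1 hc1 hw
    have heq : (fun x => Real.log (1 + Nv x)) =ᶠ[nhds w]
        fun x => Real.log 2 + (Real.log (0 + Complex.normSq (g x))
          - Real.log (1 + Complex.normSq (g x))) :=
      Filter.eventually_of_mem (hU.mem_nhds hw) fun x hx => hF x hx
    have h2 : HasFDerivAt (fun x => Real.log 2 + (Real.log (0 + Complex.normSq (g x))
          - Real.log (1 + Complex.normSq (g x)))) _ w := (hA.sub hB).const_add (Real.log 2)
    rw [heq.fderiv_eq, h2.fderiv, hA.fderiv, hB.fderiv]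
    simp only [ContinuousLinearMap.sub_apply]
  obtain ⟨ΦA1, hA1, vA1⟩ := key hU hg 0 hc0 hz 1
  obtain ⟨ΦAI, hAI, vAI⟩ := key hU hg 0 hc0 hz Complex.I
  obtain ⟨ΦB1, hB1, vB1⟩ := key hU hg 1 hc1 hz 1
  obtain ⟨ΦBI, hBI, vBI⟩ := key hU hg 1 hc1 hz Complex.I
  have E1 : (fun w => fderiv ℝ (fun x => Real.log (1 + Nv x)) w 1) =ᶠ[nhds z]
      (fun w => fderiv ℝ (fun x => Real.log (0 + Complex.normSq (g x))) w 1
        - fderiv ℝ (fun x => Real.log (1 + Complex.normSq (g x))) w 1) :=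
    Filter.eventually_of_mem hUz fun w hw => hFd 1 w hw
  have EI : (fun w => fderiv ℝ (fun x => Real.log (1 + Nv x)) w Complex.I) =ᶠ[nhds z]
      (fun w => fderiv ℝ (fun x => Real.log (0 + Complex.normSq (g x))) w Complex.I
        - fderiv ℝ (fun x => Real.log (1 + Complex.normSq (g x))) w Complex.I) :=
    Filter.eventually_of_mem hUz fun w hw => hFd Complex.I w hw
  have H1 : HasFDerivAt (fun w => fderiv ℝ (fun x => Real.log (1 + Nv x)) w 1)
      (ΦA1 - ΦB1) z := (hA1.sub hB1).congr_of_eventuallyEq E1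
  have HI : HasFDerivAt (fun w => fderiv ℝ (fun x => Real.log (1 + Nv x)) w Complex.I)
      (ΦAI - ΦBI) z := (hAI.sub hBI).congr_of_eventuallyEq EI
  have hDelta : flatLaplacian (fun w => Real.log (1 + Nv w)) z
      = -4 * Complex.normSq (deriv g z) / (1 + Complex.normSq (g z)) ^ 2 := by
    have hn : Complex.normSq (g z) ≠ 0 := ne_of_gt (Complex.normSq_pos.2 (hg0 z hz))
    have hn1 : (1 : ℝ) + Complex.normSq (g z) ≠ 0 := ne_of_gt (hc1 z hz)
    show fderiv ℝ _ z 1 + fderiv ℝ _ z Complex.I = _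
    rw [H1.fderiv, HI.fderiv]
    simp only [ContinuousLinearMap.sub_apply]
    rw [vA1, vAI, vB1, vBI]
    simp only [zero_add]
    field_simp
    simp only [Complex.mul_re, Complex.mul_im, Complex.add_re, Complex.add_im,
      Complex.conj_re, Complex.conj_im, Complex.normSq_apply, Complex.one_re,
      Complex.one_im, Complex.I_re, Complex.I_im]
    ring
  have habsf : (0 : ℝ) < ‖f z‖ := by
    simpa using norm_pos_iff.mpr (hf0 z hz)
  have habsg1 : (0 : ℝ) < 1 + ‖g z‖ ^ 2 := by positivity
  have hlamz : lam z ≠ 0 := by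
    rw [hlam]; positivity
  have hfirst : flatLaplacian (fun w => Real.log (1 + Nv w)) z = K z * lam z ^ 2 := by
    rw [hDelta, hK, hlam]
    rw [← Complex.sq_norm (deriv g z), ← Complex.sq_norm (g z)]
    field_simp
    ring
  refine ⟨hfirst, ?_⟩
  rw [hfirst]
  field_simp
end

section
/- Harmonicity of the Chern–Ricci function: let U ⊆ ℂ be open, let (f, g) be Weierstrass data on U with moreover g(z) ≠ 0 for every z ∈ U, and set N_V(z) = (|g(z)|² − 1)/(1 + |g(z)|²) (the angle function for V = (0, 0, 1)). Then the Chern–Ricci function z ↦ ln((1 + N_V(z))² / (−K(z))^{1/2}) is harmonic on U: Δ(ln((1 + N_V)² / (−K)^{1/2})) = 0 on U. -/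
open Complex Filter


lemma unit_const_abs {w : ℂ} (hw : w ≠ 0) :
    ‖((‖w‖ : ℂ) / w)‖ = 1 := by
  rw [norm_div, Complex.norm_real, norm_norm, div_self (norm_ne_zero_iff.mpr hw)]

lemma unit_const_slit {w : ℂ} (hw : w ≠ 0) :
    ((‖w‖ : ℂ) / w) * w ∈ Complex.slitPlane := by
  rw [div_mul_cancel₀ _ hw, Complex.mem_slitPlane_iff]
  left
  simpa using norm_pos_iff.mpr hw

lemma re_fderiv_apply {H : ℂ → ℂ} {z : ℂ} (h : DifferentiableAt ℂ H z) (v : ℂ) :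
    fderiv ℝ (fun w => (H w).re) z v = (v * deriv H z).re := by
  have h1 : HasFDerivAt H ((1 : ℂ →L[ℂ] ℂ).smulRight (deriv H z)) z := h.hasDerivAt.hasFDerivAt
  have h2 := Complex.reCLM.hasFDerivAt.comp z (h1.restrictScalars ℝ)
  have h3 : HasFDerivAt (fun w => (H w).re)
      (Complex.reCLM.comp (ContinuousLinearMap.restrictScalars ℝ
        ((1 : ℂ →L[ℂ] ℂ).smulRight (deriv H z)))) z := h2
  rw [h3.fderiv]
  simp [smul_eq_mul]

lemma harmonic_re {F : ℂ → ℂ} {z : ℂ} (hF : ∀ᶠ w in nhds z, DifferentiableAt ℂ F w) :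
    flatLaplacian (fun w => (F w).re) z = 0 := by
  have hAz : AnalyticAt ℂ F z := by
    have hd : DifferentiableOn ℂ F {w | DifferentiableAt ℂ F w} :=
      fun w hw => hw.differentiableWithinAt
    exact hd.analyticAt hF
  have hAd : DifferentiableAt ℂ (deriv F) z := by
    obtain ⟨s, hs, hmem⟩ := hAz.exists_mem_nhds_analyticOnNhd
    exact ((hmem.deriv) z (mem_of_mem_nhds hs)).differentiableAt
  have e1 : (fun w => fderiv ℝ (fun w => (F w).re) w (1:ℂ)) =ᶠ[nhds z]
      fun w => (deriv F w).re := by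
    filter_upwards [hF] with w hw
    rw [re_fderiv_apply hw, one_mul]
  have e2 : (fun w => fderiv ℝ (fun w => (F w).re) w Complex.I) =ᶠ[nhds z]
      fun w => ((Complex.I * deriv F w)).re := by
    filter_upwards [hF] with w hw
    rw [re_fderiv_apply hw]
  unfold flatLaplacian
  rw [e1.fderiv_eq, e2.fderiv_eq]
  rw [re_fderiv_apply hAd 1,
    re_fderiv_apply (hAd.const_mul Complex.I) Complex.I,
    deriv_const_mul Complex.I hAd]
  simp [← mul_assoc, Complex.I_mul_I]
lemma flatLaplacian_congr_s8 {F₁ F₂ : ℂ → ℝ} {s : Set ℂ} (hs : IsOpen s) {z : ℂ} (hz : z ∈ s)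
    (h : Set.EqOn F₁ F₂ s) : flatLaplacian F₁ z = flatLaplacian F₂ z := by
  have hmem : ∀ w ∈ s, fderiv ℝ F₁ w = fderiv ℝ F₂ w := fun w hw =>
    Filter.EventuallyEq.fderiv_eq (Filter.eventuallyEq_of_mem (hs.mem_nhds hw) h)
  have e1 : (fun w => fderiv ℝ F₁ w 1) =ᶠ[nhds z] fun w => fderiv ℝ F₂ w 1 :=
    Filter.eventuallyEq_of_mem (hs.mem_nhds hz) fun w hw => by rw [hmem w hw]
  have e2 : (fun w => fderiv ℝ F₁ w Complex.I) =ᶠ[nhds z] fun w => fderiv ℝ F₂ w Complex.I :=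
    Filter.eventuallyEq_of_mem (hs.mem_nhds hz) fun w hw => by rw [hmem w hw]
  unfold flatLaplacian
  rw [e1.fderiv_eq, e2.fderiv_eq]

/-- Harmonicity of the Chern–Ricci function: for Weierstrass data
`(f, g)` on an open set `U ⊆ ℂ` with moreover `g ≠ 0` on `U`, with
`K = −(4|g'| / (|f|(1 + |g|²)²))²` and `N_V = (|g|² − 1)/(1 + |g|²)` (the angle
function for `V = (0,0,1)`), the Chern–Ricci function
`z ↦ ln((1 + N_V(z))² / (−K(z))^{1/2})` is harmonic on `U`:
`Δ(ln((1 + N_V)² / (−K)^{1/2})) = 0` on `U`. -/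
theorem chern_ricci_function_harmonic
    (U : Set ℂ) (hU : IsOpen U)
    (f g : ℂ → ℂ)
    (hf : DifferentiableOn ℂ f U) (hg : DifferentiableOn ℂ g U)
    (hf0 : ∀ z ∈ U, f z ≠ 0) (hg' : ∀ z ∈ U, deriv g z ≠ 0)
    (hg0 : ∀ z ∈ U, g z ≠ 0)
    (K Nv : ℂ → ℝ)
    (hK : ∀ z, K z = -(4 * ‖deriv g z‖ /
      (‖f z‖ * (1 + ‖g z‖ ^ 2) ^ 2)) ^ 2)
    (hNv : ∀ z, Nv z = (‖g z‖ ^ 2 - 1) / (1 + ‖g z‖ ^ 2)) :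
    ∀ z ∈ U,
      flatLaplacian (fun w => Real.log ((1 + Nv w) ^ 2 / Real.sqrt (-(K w)))) z = 0 := by
  intro z hz
  have hdg : AnalyticOnNhd ℂ (deriv g) U := (hg.analyticOnNhd hU).deriv
  set cg : ℂ := (‖g z‖ : ℂ) / g z with hcg
  set cf : ℂ := (‖f z‖ : ℂ) / f z with hcf
  set cG : ℂ := (‖deriv g z‖ : ℂ) / deriv g z with hcG
  set F : ℂ → ℂ := fun w => 4 * Complex.log (cg * g w) + Complex.log (cf * f w)
    - Complex.log (cG * deriv g w) with hF
  set s : Set ℂ := ((U ∩ (fun w => cg * g w) ⁻¹' Complex.slitPlane)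
      ∩ (fun w => cf * f w) ⁻¹' Complex.slitPlane)
      ∩ (fun w => cG * deriv g w) ⁻¹' Complex.slitPlane with hs
  have hs1 : IsOpen (U ∩ (fun w => cg * g w) ⁻¹' Complex.slitPlane) :=
    (continuousOn_const.mul hg.continuousOn).isOpen_inter_preimage hU
      Complex.isOpen_slitPlane
  have hsub1 : (U ∩ (fun w => cg * g w) ⁻¹' Complex.slitPlane) ⊆ U :=
    Set.inter_subset_left
  have hs2 : IsOpen ((U ∩ (fun w => cg * g w) ⁻¹' Complex.slitPlane)
      ∩ (fun w => cf * f w) ⁻¹' Complex.slitPlane) :=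
    ((continuousOn_const.mul hf.continuousOn).mono hsub1).isOpen_inter_preimage hs1
      Complex.isOpen_slitPlane
  have hsub2 : ((U ∩ (fun w => cg * g w) ⁻¹' Complex.slitPlane)
      ∩ (fun w => cf * f w) ⁻¹' Complex.slitPlane) ⊆ U :=
    Set.inter_subset_left.trans hsub1
  have hsopen : IsOpen s :=
    ((continuousOn_const.mul hdg.continuousOn).mono hsub2).isOpen_inter_preimage hs2
      Complex.isOpen_slitPlane
  have hsubU : s ⊆ U := Set.inter_subset_left.trans hsub2
  have hzs : z ∈ s :=
    ⟨⟨⟨hz, unit_const_slit (hg0 z hz)⟩, unit_const_slit (hf0 z hz)⟩,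
      unit_const_slit (hg' z hz)⟩
  have heqOn : Set.EqOn (fun w => Real.log ((1 + Nv w) ^ 2 / Real.sqrt (-(K w))))
      (fun w => (F w).re) s := by
    intro w hw
    obtain ⟨⟨⟨hwU, hw1⟩, hw2⟩, hw3⟩ := hw
    have ha : 0 < ‖g w‖ := norm_pos_iff.mpr (hg0 w hwU)
    have hb : 0 < ‖f w‖ := norm_pos_iff.mpr (hf0 w hwU)
    have hd : 0 < ‖deriv g w‖ := norm_pos_iff.mpr (hg' w hwU)
    set a := ‖g w‖
    set b := ‖f w‖
    set d := ‖deriv g w‖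
    have hre : (F w).re = 4 * Real.log a + Real.log b - Real.log d := by
      have r1 : ‖cg * g w‖ = a := by
        rw [norm_mul, unit_const_abs (hg0 z hz), one_mul]
      have r2 : ‖cf * f w‖ = b := by
        rw [norm_mul, unit_const_abs (hf0 z hz), one_mul]
      have r3 : ‖cG * deriv g w‖ = d := by
        rw [norm_mul, unit_const_abs (hg' z hz), one_mul]
      simp only [hF, Complex.add_re, Complex.sub_re, Complex.mul_re, Complex.log_re,
        r1, r2, r3]
      norm_num
    simp only [hNv, hK]
    rw [hre]
    have h1 : (0:ℝ) < 1 + a^2 := by positivity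
    have hx : (0:ℝ) ≤ 4*d/(b*(1+a^2)^2) := by positivity
    rw [neg_neg, Real.sqrt_sq hx]
    have heq : (1 + (a^2 - 1)/(1 + a^2))^2 / (4*d/(b*(1+a^2)^2)) = a^4 * b / d := by
      field_simp
      ring
    rw [heq, Real.log_div (by positivity) hd.ne', Real.log_mul (by positivity) hb.ne',
      Real.log_pow]
    push_cast; ring
  have hFdiff : ∀ᶠ w in nhds z, DifferentiableAt ℂ F w := by
    refine eventually_of_mem (hsopen.mem_nhds hzs) ?_
    intro w hw
    obtain ⟨⟨⟨hwU, hw1⟩, hw2⟩, hw3⟩ := hw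
    have t1 : DifferentiableAt ℂ (fun w => Complex.log (cg * g w)) w :=
      ((hg.differentiableAt (hU.mem_nhds hwU)).const_mul cg).clog hw1
    have t2 : DifferentiableAt ℂ (fun w => Complex.log (cf * f w)) w :=
      ((hf.differentiableAt (hU.mem_nhds hwU)).const_mul cf).clog hw2
    have t3 : DifferentiableAt ℂ (fun w => Complex.log (cG * deriv g w)) w :=
      (((hdg w hwU).differentiableAt).const_mul cG).clog hw3
    exact ((t1.const_mul 4).add t2).sub t3
  rw [flatLaplacian_congr_s8 hsopen hzs heqOn]
  exact harmonic_re hFdiff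
end
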